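/- On the span of polynomials, (IR₀)³ = I³R₀³ + (2D₀^{(1)} + D₀^{(2)}) I²R₀² + (D₀^{(1)})² IR₀. -/

import Mathlib

/-- Backward shift `R₀` on coefficient sequences. -/
def backShift (f : ℕ → ℂ) : ℕ → ℂ := fun k => f (k + 1)

/-- Integration operator `I` on coefficient sequences. -/
noncomputable def intOp (f : ℕ → ℂ) : ℕ → ℂ :=
  fun k => if k = 0 then 0 else f (k - 1) / (k : ℂ)

/-- Diagonal operator. -/
def diagOp (d : ℕ → ℂ) (f : ℕ → ℂ) : ℕ → ℂ := fun k => d k * f k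

/-- Diagonal entries of `D₀ = [R₀, I]`. -/
noncomputable def d0 : ℕ → ℂ := fun m => if m = 0 then 1 else -(1 / ((m : ℂ) * ((m : ℂ) + 1)))

/-- Entries of the `j`-fold forward diagonal shift. -/
def fwdShiftK (d : ℕ → ℂ) (j : ℕ) : ℕ → ℂ := fun m => if m < j then 0 else d (m - j)

theorem key15 (a x : ℂ) (h1 : x+1 ≠ 0) (h2 : x+2 ≠ 0) (h3 : x+3 ≠ 0) :
    a/(x+3)/(x+3)/(x+3)
      = a/(x+1)/(x+2)/(x+3)
        + (2*(-(1/((x+2)*(x+3)))) + -(1/((x+1)*(x+2)))) * (a/(x+2)/(x+3))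
        + (-(1/((x+2)*(x+3))))^2 * (a/(x+3)) := by
  have hQ : (432 + x*2160 + x^2*4680 + x^3*5776 + x^4*4483 + x^5*2273 + x^6*754 + x^7*158
      + x^8*19 + x^9) ≠ 0 := by
    have : (432 + x*2160 + x^2*4680 + x^3*5776 + x^4*4483 + x^5*2273 + x^6*754 + x^7*158
        + x^8*19 + x^9) = (x+1)^2*(x+2)^4*(x+3)^3 := by ring
    rw [this]
    exact mul_ne_zero (mul_ne_zero (pow_ne_zero _ h1) (pow_ne_zero _ h2)) (pow_ne_zero _ h3)
  field_simp
  ring_nf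


/-- `(IR₀)³ = I³R₀³ + (2D₀^{(1)} + D₀^{(2)}) I²R₀² + (D₀^{(1)})² IR₀`. -/
theorem stmt15 (f : ℕ → ℂ) :
    (fun g => intOp (backShift g))^[3] f
      = intOp^[3] (backShift^[3] f)
        + diagOp (fun m => 2 * fwdShiftK d0 1 m + fwdShiftK d0 2 m)
            (intOp^[2] (backShift^[2] f))
        + diagOp (fun m => (fwdShiftK d0 1 m) ^ 2) (intOp (backShift f)) := by
  funext k
  simp only [Function.iterate_succ, Function.iterate_zero, Function.comp_apply, id_eq,
    Pi.add_apply, diagOp, intOp, backShift, fwdShiftK, d0]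
  match k with
  | 0 => norm_num
  | 1 => norm_num
  | 2 => norm_num; ring
  | (n+3) =>
    have h1 : ((n:ℂ)+1) ≠ 0 := Nat.cast_add_one_ne_zero n
    have h2 : ((n:ℂ)+2) ≠ 0 := by
      have : ((n+1 : ℕ):ℂ) + 1 ≠ 0 := Nat.cast_add_one_ne_zero _
      push_cast at this; intro h; exact this (by linear_combination h)
    have h3 : ((n:ℂ)+3) ≠ 0 := by
      have : ((n+2 : ℕ):ℂ) + 1 ≠ 0 := Nat.cast_add_one_ne_zero _
      push_cast at this; intro h; exact this (by linear_combination h)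
    simp only [Nat.add_sub_cancel, show ¬ n+3 < 2 from by omega, show ¬ n+3 < 1 from by omega, show ¬ 3+n < 2 from by omega,
      if_false, show n+3 ≠ 0 from by omega, show n+3-2 = n+1 from by omega,
      show n+3-1 = n+2 from by omega]
    push_cast
    simp only [show n+2+1 = n+3 from by omega, show n+1+1+1 = n+3 from by omega,
      show ((n:ℂ)+1+1) = (n:ℂ)+2 from by ring, show ((n:ℂ)+2+1) = (n:ℂ)+3 from by ring]
    exact key15 (f (n+3)) (n:ℂ) h1 h2 h3
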